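/- Sequential concatenation lemma: If [n]^2 admits a structured (a,1) knight's tour and an A-linked (a,1) knight's tour, then for every natural number k ≥ 1, [kn]^2 admits a structured (a,1) knight's tour. -/

import Mathlib

open SimpleGraph

set_option linter.unusedSectionVars false
set_option maxHeartbeats 1000000


/-- The (a,b) knight's graph on `ℕ × ℕ`: `(x,y) ~ (x',y')` iff `{|x-x'|,|y-y'|} = {a,b}`. -/
def knightGraph (a b : ℕ) : SimpleGraph (ℕ × ℕ) :=
  SimpleGraph.fromRel (fun v w =>
    ((v.1 + a = w.1 ∨ w.1 + a = v.1) ∧ (v.2 + b = w.2 ∨ w.2 + b = v.2)) ∨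
    ((v.1 + b = w.1 ∨ w.1 + b = v.1) ∧ (v.2 + a = w.2 ∨ w.2 + a = v.2)))

/-- A closed walk is a knight's tour of the board `[n]^2` if it is a cycle whose support is
exactly the board `[n] × [n]`. -/
def IsBoardTour (a b n : ℕ) {v : ℕ × ℕ} (p : (knightGraph a b).Walk v v) : Prop :=
  p.IsCycle ∧ ∀ x : ℕ × ℕ, x ∈ p.support ↔ (x.1 < n ∧ x.2 < n)

/-- A (a,1) knight's tour is *structured* if it contains all the edges
`{(i,j), (i+a, j+(-1)^j)}` for `0 ≤ i,j ≤ a-1`. -/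
def IsStructured (a : ℕ) {v : ℕ × ℕ} (p : (knightGraph a 1).Walk v v) : Prop :=
  ∀ i j : ℕ, i < a → j < a →
    (Even j → s((i, j), (i + a, j + 1)) ∈ p.edges) ∧
    (Odd j → s((i, j), (i + a, j - 1)) ∈ p.edges)

/-- A (a,1) knight's tour is *A-linked* if it contains link A, the edge
`{(a-1,1), (a-2,a+1)}`. -/
def IsALinked (a : ℕ) {v : ℕ × ℕ} (p : (knightGraph a 1).Walk v v) : Prop :=
  s((a - 1, 1), (a - 2, a + 1)) ∈ p.edges

lemma knight_adj_iff {a b : ℕ} (v w : ℕ × ℕ) :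
    (knightGraph a b).Adj v w ↔ ¬(v.1 = w.1 ∧ v.2 = w.2) ∧
      (((v.1 + a = w.1 ∨ w.1 + a = v.1) ∧ (v.2 + b = w.2 ∨ w.2 + b = v.2)) ∨
       ((v.1 + b = w.1 ∨ w.1 + b = v.1) ∧ (v.2 + a = w.2 ∨ w.2 + a = v.2))) := by
  rw [knightGraph, SimpleGraph.fromRel_adj]
  constructor
  · rintro ⟨h, h2 | h2⟩ <;>
    · refine ⟨fun hc => h (Prod.ext hc.1 hc.2), ?_⟩
      tauto
  · rintro ⟨h, h2⟩
    refine ⟨fun hc => h ⟨congrArg Prod.fst hc, congrArg Prod.snd hc⟩, Or.inl h2⟩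

lemma sym2_eq_iff {A B C D : ℕ×ℕ} : s(A,B) = s(C,D) ↔
    ((A.1 = C.1 ∧ A.2 = C.2 ∧ B.1 = D.1 ∧ B.2 = D.2) ∨
     (A.1 = D.1 ∧ A.2 = D.2 ∧ B.1 = C.1 ∧ B.2 = C.2)) := by
  rw [Sym2.eq_iff]
  simp [Prod.ext_iff, and_assoc]

lemma edge_congr {L : List (Sym2 (ℕ×ℕ))} {a1 a2 b1 b2 c1 c2 d1 d2 : ℕ}
    (h : s((a1,a2),(b1,b2)) ∈ L) (e1 : a1 = c1) (e2 : a2 = c2) (e3 : b1 = d1)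
    (e4 : b2 = d2) : s((c1,c2),(d1,d2)) ∈ L := by
  subst e1; subst e2; subst e3; subst e4; exact h

def shiftHom (a b : ℕ) (c : ℕ × ℕ) : knightGraph a b →g knightGraph a b where
  toFun v := (v.1 + c.1, v.2 + c.2)
  map_rel' := by
    intro v w h
    rw [knight_adj_iff] at h ⊢
    simp only at h ⊢
    omega

def swapHom (a b : ℕ) : knightGraph a b →g knightGraph a b where
  toFun v := (v.2, v.1)
  map_rel' := by
    intro v w h
    rw [knight_adj_iff] at h ⊢
    simp only at h ⊢
    omega

lemma shiftHom_apply {a b : ℕ} (c v : ℕ × ℕ) : (shiftHom a b c) v = (v.1 + c.1, v.2 + c.2) :=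
  rfl

lemma swapHom_apply {a b : ℕ} (v : ℕ × ℕ) : (swapHom a b) v = (v.2, v.1) := rfl

lemma shiftHom_inj {a b : ℕ} (c : ℕ × ℕ) : Function.Injective (shiftHom a b c) := by
  intro v w h
  rw [shiftHom_apply, shiftHom_apply, Prod.mk.injEq] at h
  exact Prod.ext (by omega) (by omega)

lemma swapHom_inj {a b : ℕ} : Function.Injective (swapHom a b) := by
  intro v w h
  rw [swapHom_apply, swapHom_apply, Prod.mk.injEq] at h
  exact Prod.ext h.2 h.1

lemma map_edge_mem {a b : ℕ} {v u w : ℕ × ℕ} (p : (knightGraph a b).Walk v v)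
    (f : knightGraph a b →g knightGraph a b) (he : s(u, w) ∈ p.edges) :
    s(f u, f w) ∈ (p.map f).edges := by
  rw [Walk.edges_map, ← Sym2.map_pair_eq]
  exact List.mem_map_of_mem he

variable {V : Type*} [DecidableEq V] {G : SimpleGraph V}

lemma cycle_two_edges {v u : V} {p : G.Walk v v}
    (hp : p.IsCycle) (hu : u ∈ p.support) :
    ∃ w1 w2, w1 ≠ w2 ∧ s(u, w1) ∈ p.edges ∧ s(u, w2) ∈ p.edges := by
  have hq : (p.rotate u hu).IsCycle := hp.rotate hu
  have hedges : ∀ e, e ∈ (p.rotate u hu).edges → e ∈ p.edges :=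
    fun e he => ((p.rotate_edges u hu).perm.mem_iff).mp he
  revert hq hedges
  generalize (p.rotate u hu) = q
  intro hq hedges
  cases q with
  | nil => exact absurd rfl hq.ne_nil
  | cons h r =>
    rename_i w1
    have hne : u ≠ w1 := h.ne
    obtain ⟨w2, h2, r', hr'⟩ := SimpleGraph.Walk.exists_eq_cons_of_ne hne r.reverse
    have he2 : s(u, w2) ∈ r.edges := by
      have : s(u, w2) ∈ r.reverse.edges := by rw [hr']; simp
      rwa [SimpleGraph.Walk.edges_reverse, List.mem_reverse] at this
    have hnodup : (SimpleGraph.Walk.cons h r).edges.Nodup := hq.isTrail.edges_nodup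
    rw [SimpleGraph.Walk.edges_cons, List.nodup_cons] at hnodup
    refine ⟨w1, w2, fun hc => ?_, hedges _ (by simp), hedges _ (by simp [he2])⟩
    exact hnodup.1 (hc ▸ he2)


lemma path_first_edge {x y u : V} (p : G.Walk x u) (hp : p.IsPath)
    (he : s(x, y) ∈ p.edges) :
    ∃ (h : G.Adj x y) (p' : G.Walk y u), p = Walk.cons h p' := by
  have hxy : x ≠ y := (p.adj_of_mem_edges he).ne
  cases p with
  | nil => simp at he
  | cons h t =>
    rename_i w
    rw [Walk.edges_cons, List.mem_cons] at he
    rcases he with he | he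
    · have : y = w := by
        rcases Sym2.eq_iff.mp he with ⟨-, rfl⟩ | ⟨h1, h2⟩
        · rfl
        · exact absurd h2.symm hxy
      subst this
      exact ⟨h, t, rfl⟩
    · exfalso
      have hx : x ∈ t.support := Walk.fst_mem_support_of_mem_edges t he
      have := hp.support_nodup
      rw [Walk.support_cons, List.nodup_cons] at this
      exact this.1 hx

lemma closed_mem_support_tail {v : V} {p : G.Walk v v} (hnil : ¬ p.Nil) :
    ∀ z, z ∈ p.support ↔ z ∈ p.support.tail := by
  intro z
  obtain ⟨u, h, q, rfl⟩ := Walk.not_nil_iff.mp hnil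
  rw [Walk.support_cons]
  constructor
  · intro hz
    rcases List.mem_cons.mp hz with rfl | hz
    · simpa using q.end_mem_support
    · simpa using hz
  · intro hz
    exact List.mem_cons_of_mem _ (by simpa using hz)

lemma cycle_split {v x y : V} {p : G.Walk v v} (hp : p.IsCycle)
    (he : s(x, y) ∈ p.edges) :
    ∃ P : G.Walk y x, P.IsPath ∧ (∀ e, e ∈ P.edges ↔ e ∈ p.edges ∧ e ≠ s(x, y)) ∧
      (∀ z, z ∈ P.support ↔ z ∈ p.support) := by
  have hxy : x ≠ y := (p.adj_of_mem_edges he).ne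
  have hx : x ∈ p.support := p.fst_mem_support_of_mem_edges he
  have hq : (p.rotate x hx).IsCycle := hp.rotate hx
  have hedges : ∀ e, e ∈ (p.rotate x hx).edges ↔ e ∈ p.edges :=
    fun e => (p.rotate_edges x hx).perm.mem_iff
  have hsup : ∀ z, z ∈ (p.rotate x hx).support ↔ z ∈ p.support := by
    intro z
    rw [closed_mem_support_tail hq.not_nil, closed_mem_support_tail hp.not_nil,
      (p.support_rotate x hx).perm.mem_iff]
  have he' : s(x, y) ∈ (p.rotate x hx).edges := (hedges _).mpr he
  -- now work with q
  suffices h : ∃ P : G.Walk y x, P.IsPath ∧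
      (∀ e, e ∈ P.edges ↔ e ∈ (p.rotate x hx).edges ∧ e ≠ s(x, y)) ∧
      (∀ z, z ∈ P.support ↔ z ∈ (p.rotate x hx).support) by
    obtain ⟨P, h1, h2, h3⟩ := h
    exact ⟨P, h1, fun e => (h2 e).trans (by rw [hedges]),
      fun z => (h3 z).trans (hsup z)⟩
  revert hq he'
  generalize (p.rotate x hx) = q
  intro hq he'
  cases q with
  | nil => exact absurd rfl hq.ne_nil
  | cons h r =>
    rename_i w
    have hrpath : r.IsPath := by
      rw [Walk.isPath_def]
      have := hq.support_nodup
      rwa [Walk.support_cons, List.tail_cons] at this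
    have hnodup : (Walk.cons h r).edges.Nodup := hq.isTrail.edges_nodup
    rw [Walk.edges_cons, List.nodup_cons] at hnodup
    rw [Walk.edges_cons, List.mem_cons] at he'
    rcases he' with he' | he'
    · -- first edge; y = w
      have : y = w := by
        rcases Sym2.eq_iff.mp he' with ⟨-, rfl⟩ | ⟨h1, h2⟩
        · rfl
        · exact absurd h2.symm hxy
      subst this
      refine ⟨r, hrpath, fun e => ?_, fun z => ?_⟩
      · constructor
        · intro her
          exact ⟨by simp [her], fun hc => hnodup.1 (hc ▸ her)⟩
        · rintro ⟨hee, hne⟩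
          rw [Walk.edges_cons, List.mem_cons] at hee
          rcases hee with rfl | hee
          · exact absurd he'.symm hne
          · exact hee
      · rw [Walk.support_cons]
        constructor
        · intro hz; exact List.mem_cons_of_mem _ hz
        · intro hz
          rcases List.mem_cons.mp hz with rfl | hz
          · exact r.end_mem_support
          · exact hz
    · -- last edge
      have hyr : s(x, y) ∈ r.reverse.edges := by
        rwa [Walk.edges_reverse, List.mem_reverse]
      obtain ⟨h', P', hP'⟩ := path_first_edge r.reverse (hrpath.reverse) hyr
      have hr : r = (Walk.cons h' P').reverse := by rw [← hP', Walk.reverse_reverse]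
      have hP'path : P'.IsPath := by
        have := hrpath.reverse
        rw [hP', Walk.cons_isPath_iff] at this
        exact this.1
      have hxP' : x ∉ P'.support := by
        have := hrpath.reverse
        rw [hP', Walk.cons_isPath_iff] at this
        exact this.2
      have hyP'e : s(x, y) ∉ P'.edges := by
        intro hc
        exact hxP' (Walk.fst_mem_support_of_mem_edges P' hc)
      refine ⟨(Walk.cons h P'.reverse).reverse, ?_, fun e => ?_, fun z => ?_⟩
      · rw [Walk.isPath_reverse_iff, Walk.cons_isPath_iff]
        exact ⟨hP'path.reverse, by simpa using hxP'⟩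
      · rw [Walk.edges_reverse, List.mem_reverse, Walk.edges_cons, List.mem_cons,
          Walk.edges_reverse, List.mem_reverse]
        rw [Walk.edges_cons, List.mem_cons]
        constructor
        · rintro (rfl | hee)
          · refine ⟨Or.inl rfl, fun hc => ?_⟩
            apply hnodup.1
            rw [hc]; exact he'
          · refine ⟨Or.inr ?_, fun hc => hyP'e (hc ▸ hee)⟩
            rw [hr, Walk.edges_reverse, List.mem_reverse, Walk.edges_cons]
            exact List.mem_cons_of_mem _ hee
        · rintro ⟨(rfl | hee), hne⟩
          · exact Or.inl rfl
          · right
            rw [hr, Walk.edges_reverse, List.mem_reverse, Walk.edges_cons,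
              List.mem_cons] at hee
            rcases hee with rfl | hee
            · exact absurd rfl hne
            · exact hee
      · rw [Walk.support_reverse, List.mem_reverse, Walk.support_cons, List.mem_cons,
          Walk.support_reverse, List.mem_reverse]
        rw [Walk.support_cons, List.mem_cons]
        have hrsup : ∀ z, z ∈ r.support ↔ z = x ∨ z ∈ P'.support := by
          intro z
          rw [hr, Walk.support_reverse, List.mem_reverse, Walk.support_cons, List.mem_cons]
        rw [hrsup]
        tauto

lemma cycle_merge {v1 v2 x1 y1 x2 y2 : V}
    {c1 : G.Walk v1 v1} {c2 : G.Walk v2 v2} (h1 : c1.IsCycle) (h2 : c2.IsCycle)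
    (he1 : s(x1, y1) ∈ c1.edges) (he2 : s(x2, y2) ∈ c2.edges)
    (hdisj : ∀ z, z ∈ c1.support → z ∈ c2.support → False)
    (ha : G.Adj x1 x2) (hb : G.Adj y1 y2) :
    ∃ c : G.Walk x1 x1, c.IsCycle ∧
      (∀ z, z ∈ c.support ↔ (z ∈ c1.support ∨ z ∈ c2.support)) ∧
      (∀ e, e ∈ c1.edges → e ≠ s(x1, y1) → e ∈ c.edges) ∧
      (∀ e, e ∈ c2.edges → e ≠ s(x2, y2) → e ∈ c.edges) := by
  obtain ⟨P1, hP1, hP1e, hP1s⟩ := cycle_split h1 he1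
  obtain ⟨P2, hP2, hP2e, hP2s⟩ := cycle_split h2 he2
  have hx1c1 : x1 ∈ c1.support := c1.fst_mem_support_of_mem_edges he1
  have hy1c1 : y1 ∈ c1.support := c1.snd_mem_support_of_mem_edges he1
  have hx2c2 : x2 ∈ c2.support := c2.fst_mem_support_of_mem_edges he2
  have hy2c2 : y2 ∈ c2.support := c2.snd_mem_support_of_mem_edges he2
  -- the new cycle
  refine ⟨Walk.cons ha (P2.reverse.append (Walk.cons hb.symm P1)), ?_, ?_, ?_, ?_⟩
  · rw [Walk.isCycle_def]
    refine ⟨?_, by simp, ?_⟩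
    case refine_2 =>
      rw [Walk.support_cons, List.tail_cons, Walk.support_append, Walk.support_cons,
        List.tail_cons, Walk.support_reverse, List.nodup_append]
      refine ⟨by simpa using hP2.support_nodup, hP1.support_nodup, ?_⟩
      intro z hz2 w hz1 rfl
      rw [List.mem_reverse, hP2s] at hz2
      rw [hP1s] at hz1
      exact hdisj z hz1 hz2
    · -- trail
      rw [Walk.isTrail_def, Walk.edges_cons, Walk.edges_append, Walk.edges_cons,
        Walk.edges_reverse]
      have hP1nd : P1.edges.Nodup := hP1.isTrail.edges_nodup
      have hP2nd : P2.edges.Nodup := hP2.isTrail.edges_nodup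
      have hmem1 : ∀ e ∈ P1.edges, e ∈ c1.edges := fun e he => ((hP1e e).mp he).1
      have hmem2 : ∀ e ∈ P2.edges, e ∈ c2.edges := fun e he => ((hP2e e).mp he).1
      have hcross : ∀ e, e ∈ P1.edges → e ∈ P2.edges → False := by
        intro e heA heB
        induction e using Sym2.ind with
        | _ z w =>
          exact hdisj z (c1.fst_mem_support_of_mem_edges (hmem1 _ heA))
            (c2.fst_mem_support_of_mem_edges (hmem2 _ heB))
      rw [List.nodup_cons, List.nodup_append]
      refine ⟨?_, by simpa using hP2nd, ?_, ?_⟩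
      · -- s(x1,x2) not in the rest
        rw [List.mem_append, List.mem_reverse, List.mem_cons]
        rintro (hc | hc | hc)
        · exact hdisj x1 hx1c1 (c2.fst_mem_support_of_mem_edges (hmem2 _ hc))
        · rcases Sym2.eq_iff.mp hc with ⟨h1', h2'⟩ | ⟨h1', h2'⟩
          · exact hdisj x1 hx1c1 (by rw [h1']; exact hy2c2)
          · exact (c1.adj_of_mem_edges he1).ne h1'
        · exact hdisj x2 (c1.fst_mem_support_of_mem_edges
            (hmem1 _ (by rwa [Sym2.eq_swap] at hc))) hx2c2
      · rw [List.nodup_cons]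
        exact ⟨fun hc => hdisj y2 (c1.fst_mem_support_of_mem_edges
          (hmem1 _ (by rwa [Sym2.eq_swap] at hc))) hy2c2, hP1nd⟩
      · -- disjointness of P2.reverse.edges and (s(y2,y1) :: P1.edges)
        intro e heB
        rw [List.mem_reverse] at heB
        intro b hb rfl
        rw [List.mem_cons] at hb
        rcases hb with rfl | hc
        · exact hdisj y1 hy1c1 (c2.snd_mem_support_of_mem_edges (hmem2 _ heB))
        · exact hcross e hc heB
  · intro z
    rw [Walk.support_cons, List.mem_cons, Walk.mem_support_append_iff,
      Walk.support_reverse, List.mem_reverse, Walk.support_cons, List.mem_cons]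
    rw [hP1s, hP2s]
    constructor
    · rintro (rfl | hz | rfl | hz)
      · exact Or.inl hx1c1
      · exact Or.inr hz
      · exact Or.inr hy2c2
      · exact Or.inl hz
    · rintro (hz | hz)
      · right; right; right; exact hz
      · right; left; exact hz
  · intro e hee hne
    rw [Walk.edges_cons, List.mem_cons]
    right
    rw [Walk.edges_append, List.mem_append, Walk.edges_cons, List.mem_cons]
    right; right
    exact (hP1e e).mpr ⟨hee, hne⟩
  · intro e hee hne
    rw [Walk.edges_cons, List.mem_cons]
    right
    rw [Walk.edges_append, List.mem_append, Walk.edges_cons, List.mem_cons]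
    left
    rw [Walk.edges_reverse, List.mem_reverse]
    exact (hP2e e).mpr ⟨hee, hne⟩


lemma corner_edges {a n : ℕ} (ha : 2 ≤ a) (hn : 2*a ≤ n) (c1 c2 : ℕ) {v : ℕ × ℕ}
    {p : (knightGraph a 1).Walk v v} (hp : p.IsCycle)
    (hsupp : ∀ x : ℕ×ℕ, x ∈ p.support ↔ (c1 ≤ x.1 ∧ x.1 < c1+n ∧ c2 ≤ x.2 ∧ x.2 < c2+n)) :
    s((c1+n-1, c2), (c1+n-2, c2+a)) ∈ p.edges ∧
    s((c1, c2+n-1), (c1+a, c2+n-2)) ∈ p.edges := by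
  have key : ∀ (u u1 u2 : ℕ × ℕ), u ∈ p.support →
      (∀ w : ℕ × ℕ, (knightGraph a 1).Adj u w →
        (c1 ≤ w.1 ∧ w.1 < c1+n ∧ c2 ≤ w.2 ∧ w.2 < c2+n) → w = u1 ∨ w = u2) →
      s(u, u2) ∈ p.edges := by
    intro u u1 u2 hu hclass
    obtain ⟨w1, w2, hne, he1, he2⟩ := cycle_two_edges hp hu
    have hw1 := hclass w1 (p.adj_of_mem_edges he1)
      ((hsupp w1).mp (p.snd_mem_support_of_mem_edges he1))
    have hw2 := hclass w2 (p.adj_of_mem_edges he2)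
      ((hsupp w2).mp (p.snd_mem_support_of_mem_edges he2))
    rcases hw1 with rfl | rfl
    · rcases hw2 with rfl | rfl
      · exact absurd rfl hne
      · exact he2
    · exact he1
  constructor
  · refine key (c1+n-1, c2) (c1+n-1-a, c2+1) (c1+n-2, c2+a) (by rw [hsupp]; simp; omega) ?_
    rintro ⟨wx, wy⟩ hadj hbox
    rw [knight_adj_iff] at hadj
    simp only [Prod.mk.injEq]
    simp only at hadj hbox
    omega
  · refine key (c1, c2+n-1) (c1+1, c2+n-1-a) (c1+a, c2+n-2) (by rw [hsupp]; simp; omega) ?_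
    rintro ⟨wx, wy⟩ hadj hbox
    rw [knight_adj_iff] at hadj
    simp only [Prod.mk.injEq]
    simp only at hadj hbox
    omega


lemma row_board {a n : ℕ} (h2a : 2 ≤ a)
    (hTA : ∃ (v : ℕ × ℕ) (p : (knightGraph a 1).Walk v v), IsBoardTour a 1 n p ∧ IsALinked a p)
    (s : ℕ) :
    ∃ (v : ℕ × ℕ) (p : (knightGraph a 1).Walk v v), p.IsCycle ∧
      (∀ x : ℕ×ℕ, x ∈ p.support ↔ (s*n ≤ x.1 ∧ x.1 < s*n+n ∧ 0 ≤ x.2 ∧ x.2 < 0+n)) ∧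
      s((s*n+a-1, 1), (s*n+a-2, a+1)) ∈ p.edges := by
  obtain ⟨v, p, ⟨hc, hsupp⟩, hlk⟩ := hTA
  refine ⟨_, p.map (shiftHom a 1 (s*n, 0)),
    (Walk.map_isCycle_iff_of_injective (shiftHom_inj _)).mpr hc, ?_, ?_⟩
  · rintro ⟨x1, x2⟩
    rw [Walk.support_map, List.mem_map]
    simp only
    constructor
    · rintro ⟨⟨y1, y2⟩, hy, heq⟩
      rw [hsupp] at hy
      simp only [shiftHom_apply, Prod.mk.injEq] at heq hy
      omega
    · intro hx
      refine ⟨(x1 - s*n, x2), ?_, ?_⟩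
      · rw [hsupp]; simp only; omega
      · simp only [shiftHom_apply, Prod.mk.injEq]; omega
  · have := map_edge_mem p (shiftHom a 1 (s*n, 0)) hlk
    simp only [shiftHom_apply] at this
    exact edge_congr this (by omega) (by omega) (by omega) (by omega)

lemma col_board {a n : ℕ} (h2a : 2 ≤ a)
    (hTA : ∃ (v : ℕ × ℕ) (p : (knightGraph a 1).Walk v v), IsBoardTour a 1 n p ∧ IsALinked a p)
    (s t : ℕ) :
    ∃ (v : ℕ × ℕ) (p : (knightGraph a 1).Walk v v), p.IsCycle ∧
      (∀ x : ℕ×ℕ, x ∈ p.support ↔ (s*n ≤ x.1 ∧ x.1 < s*n+n ∧ t*n ≤ x.2 ∧ x.2 < t*n+n)) ∧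
      s((s*n+1, t*n+a-1), (s*n+a+1, t*n+a-2)) ∈ p.edges := by
  obtain ⟨v, p, ⟨hc, hsupp⟩, hlk⟩ := hTA
  have hf : ∀ y : ℕ×ℕ,
      ((shiftHom a 1 (s*n, t*n)).comp (swapHom a 1)) y = (y.2 + s*n, y.1 + t*n) :=
    fun y => rfl
  have hfi : Function.Injective ((shiftHom a 1 (s*n, t*n)).comp (swapHom a 1)) := by
    intro y z h
    rw [hf, hf, Prod.mk.injEq] at h
    exact Prod.ext (by omega) (by omega)
  refine ⟨_, p.map ((shiftHom a 1 (s*n, t*n)).comp (swapHom a 1)),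
    (Walk.map_isCycle_iff_of_injective hfi).mpr hc, ?_, ?_⟩
  · rintro ⟨x1, x2⟩
    rw [Walk.support_map, List.mem_map]
    simp only
    constructor
    · rintro ⟨⟨y1, y2⟩, hy, heq⟩
      rw [hsupp] at hy
      simp only [hf, Prod.mk.injEq] at heq hy
      omega
    · intro hx
      refine ⟨(x2 - t*n, x1 - s*n), ?_, ?_⟩
      · rw [hsupp]; simp only; omega
      · simp only [hf, Prod.mk.injEq]; omega
  · have := map_edge_mem p ((shiftHom a 1 (s*n, t*n)).comp (swapHom a 1)) hlk
    simp only [hf] at this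
    exact edge_congr this (by omega) (by omega) (by omega) (by omega)


lemma structured_preserve {a : ℕ} {v1 v2 : ℕ×ℕ} {p : (knightGraph a 1).Walk v1 v1}
    {q : (knightGraph a 1).Walk v2 v2} {E : Sym2 (ℕ×ℕ)} (hs : IsStructured a p)
    (hsub : ∀ e, e ∈ p.edges → e ≠ E → e ∈ q.edges)
    (hne : ∀ i j j' : ℕ, i < a → j < a → j' ≤ a → s(((i:ℕ),(j:ℕ)),((i+a:ℕ),(j':ℕ))) ≠ E) :
    IsStructured a q := by
  intro i j hi hj
  exact ⟨fun hev => hsub _ ((hs i j hi hj).1 hev) (hne i j (j+1) hi hj (by omega)),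
    fun hod => hsub _ ((hs i j hi hj).2 hod) (hne i j (j-1) hi hj (by omega))⟩

lemma phase1 {a n : ℕ} (h2a : 2 ≤ a) (hn : 2*a ≤ n)
    (hTS : ∃ (v : ℕ × ℕ) (p : (knightGraph a 1).Walk v v), IsBoardTour a 1 n p ∧ IsStructured a p)
    (hTA : ∃ (v : ℕ × ℕ) (p : (knightGraph a 1).Walk v v), IsBoardTour a 1 n p ∧ IsALinked a p) :
    ∀ m : ℕ, 1 ≤ m → ∃ (v : ℕ × ℕ) (p : (knightGraph a 1).Walk v v), p.IsCycle ∧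
      (∀ x : ℕ×ℕ, x ∈ p.support ↔ (x.1 < m*n ∧ x.2 < n)) ∧ IsStructured a p ∧
      (∀ s, s < m → s(((s*n : ℕ), n-1), (s*n+a, n-2)) ∈ p.edges) ∧
      s((m*n-1, (0:ℕ)), (m*n-2, a)) ∈ p.edges := by
  intro m hm
  induction m, hm using Nat.le_induction with
  | base =>
    obtain ⟨v, p, ⟨hc, hsupp⟩, hstr⟩ := hTS
    have hbox : ∀ x : ℕ×ℕ, x ∈ p.support ↔ (0 ≤ x.1 ∧ x.1 < 0+n ∧ 0 ≤ x.2 ∧ x.2 < 0+n) := by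
      intro x; rw [hsupp]; omega
    obtain ⟨hbr, htl⟩ := corner_edges h2a hn 0 0 hc hbox
    refine ⟨v, p, hc, by intro x; rw [hsupp]; omega, hstr, ?_, ?_⟩
    · intro s hs
      rcases Nat.lt_one_iff.mp hs with rfl
      exact edge_congr htl (by omega) (by omega) (by omega) (by omega)
    · exact edge_congr hbr (by omega) (by omega) (by omega) (by omega)
  | succ m hm ih =>
    obtain ⟨v, p, hc, hsupp, hstr, htl, hbr⟩ := ih
    obtain ⟨v2, p2, hc2, hsupp2, hlk2⟩ := row_board h2a hTA m
    have hnm : 1*n ≤ m*n := Nat.mul_le_mul_right n hm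
    have hmn1 : (m+1)*n = m*n + n := by ring
    obtain ⟨hbr2, htl2⟩ := corner_edges h2a hn (m*n) 0 hc2 hsupp2
    have ha : (knightGraph a 1).Adj (m*n-1, 0) (m*n+a-1, 1) := by
      rw [knight_adj_iff]; omega
    have hb : (knightGraph a 1).Adj (m*n-2, a) (m*n+a-2, a+1) := by
      rw [knight_adj_iff]; omega
    have hdisj : ∀ z, z ∈ p.support → z ∈ p2.support → False := by
      intro z h1 h2; rw [hsupp] at h1; rw [hsupp2] at h2; omega
    obtain ⟨c, hccyc, hcsupp, hsub1, hsub2⟩ := cycle_merge hc hc2 hbr hlk2 hdisj ha hb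
    refine ⟨_, c, hccyc, ?_, ?_, ?_, ?_⟩
    · intro x
      rw [hcsupp, hsupp, hsupp2]; omega
    · refine structured_preserve hstr hsub1 ?_
      intro i j j' hi hj hj' hcE
      rw [sym2_eq_iff] at hcE; simp only at hcE; omega
    · intro s hs
      rcases Nat.lt_succ_iff_lt_or_eq.mp hs with hs | rfl
      · refine hsub1 _ (htl s hs) ?_
        intro hcE; rw [sym2_eq_iff] at hcE; simp only at hcE; omega
      · refine hsub2 _ (edge_congr htl2 (by omega) (by omega) (by omega) (by omega)) ?_
        intro hcE; rw [sym2_eq_iff] at hcE; simp only at hcE; omega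
    · refine hsub2 _ (edge_congr hbr2 (by omega) (by omega) (by omega) (by omega)) ?_
      intro hcE; rw [sym2_eq_iff] at hcE; simp only at hcE; omega

lemma strip_lemma {a n : ℕ} (h2a : 2 ≤ a) (hn : 2*a ≤ n)
    (hTA : ∃ (v : ℕ × ℕ) (p : (knightGraph a 1).Walk v v), IsBoardTour a 1 n p ∧ IsALinked a p)
    (s : ℕ) :
    ∀ t : ℕ, 1 ≤ t → ∃ (v : ℕ × ℕ) (p : (knightGraph a 1).Walk v v), p.IsCycle ∧
      (∀ x : ℕ×ℕ, x ∈ p.support ↔ (s*n ≤ x.1 ∧ x.1 < s*n+n ∧ n ≤ x.2 ∧ x.2 < t*n+n)) ∧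
      s((s*n+1, n+a-1), (s*n+a+1, n+a-2)) ∈ p.edges ∧
      s(((s*n : ℕ), t*n+n-1), (s*n+a, t*n+n-2)) ∈ p.edges := by
  intro t ht
  induction t, ht using Nat.le_induction with
  | base =>
    obtain ⟨v, p, hc, hsupp, hlk⟩ := col_board h2a hTA s 1
    obtain ⟨hbr, htl⟩ := corner_edges h2a hn (s*n) (1*n) hc hsupp
    exact ⟨v, p, hc, by intro x; rw [hsupp]; omega,
      edge_congr hlk (by omega) (by omega) (by omega) (by omega),
      edge_congr htl (by omega) (by omega) (by omega) (by omega)⟩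
  | succ t ht ih =>
    obtain ⟨v, p, hc, hsupp, hlk1, htlt⟩ := ih
    obtain ⟨v2, p2, hc2, hsupp2, hlk2⟩ := col_board h2a hTA s (t+1)
    have htn : (t+1)*n = t*n + n := by ring
    have hnt : 1*n ≤ t*n := Nat.mul_le_mul_right n ht
    obtain ⟨hbr2, htl2⟩ := corner_edges h2a hn (s*n) ((t+1)*n) hc2 hsupp2
    have ha : (knightGraph a 1).Adj (s*n, t*n+n-1) (s*n+1, (t+1)*n+a-1) := by
      rw [knight_adj_iff]; omega
    have hb : (knightGraph a 1).Adj (s*n+a, t*n+n-2) (s*n+a+1, (t+1)*n+a-2) := by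
      rw [knight_adj_iff]; omega
    have hdisj : ∀ z, z ∈ p.support → z ∈ p2.support → False := by
      intro z h1 h2; rw [hsupp] at h1; rw [hsupp2] at h2; omega
    obtain ⟨c, hccyc, hcsupp, hsub1, hsub2⟩ := cycle_merge hc hc2 htlt hlk2 hdisj ha hb
    refine ⟨_, c, hccyc, ?_, ?_, ?_⟩
    · intro x; rw [hcsupp, hsupp, hsupp2]; omega
    · refine hsub1 _ hlk1 ?_
      intro hcE; rw [sym2_eq_iff] at hcE; simp only at hcE; omega
    · refine hsub2 _ (edge_congr htl2 (by omega) (by omega) (by omega) (by omega)) ?_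
      intro hcE; rw [sym2_eq_iff] at hcE; simp only at hcE; omega

lemma phase2 {a n k : ℕ} (h2a : 2 ≤ a) (hn : 2*a ≤ n) (hk : 2 ≤ k)
    (hTS : ∃ (v : ℕ × ℕ) (p : (knightGraph a 1).Walk v v), IsBoardTour a 1 n p ∧ IsStructured a p)
    (hTA : ∃ (v : ℕ × ℕ) (p : (knightGraph a 1).Walk v v), IsBoardTour a 1 n p ∧ IsALinked a p) :
    ∀ s : ℕ, s ≤ k → ∃ (v : ℕ × ℕ) (p : (knightGraph a 1).Walk v v), p.IsCycle ∧
      (∀ x : ℕ×ℕ, x ∈ p.support ↔ ((x.1 < k*n ∧ x.2 < n) ∨ (x.1 < s*n ∧ x.2 < k*n))) ∧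
      IsStructured a p ∧
      (∀ s', s ≤ s' → s' < k → s(((s'*n : ℕ), n-1), (s'*n+a, n-2)) ∈ p.edges) := by
  intro s
  induction s with
  | zero =>
    intro _
    obtain ⟨v, p, hc, hsupp, hstr, htl, _⟩ := phase1 h2a hn hTS hTA k (by omega)
    exact ⟨v, p, hc, by intro x; rw [hsupp]; omega, hstr, fun s' _ hs' => htl s' hs'⟩
  | succ s ih =>
    intro hsk
    obtain ⟨v, p, hc, hsupp, hstr, htl⟩ := ih (by omega)
    obtain ⟨v2, p2, hc2, hsupp2, hlk2, _⟩ := strip_lemma h2a hn hTA s (k-1) (by omega)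
    have hk1 : (k-1)*n + n = k*n := by
      have h' : k - 1 + 1 = k := by omega
      calc (k-1)*n + n = (k-1+1)*n := by ring
        _ = k*n := by rw [h']
    have hsn : (s+1)*n = s*n + n := by ring
    have hsk' : (s+1)*n ≤ k*n := Nat.mul_le_mul_right n hsk
    have ha : (knightGraph a 1).Adj (s*n, n-1) (s*n+1, n+a-1) := by
      rw [knight_adj_iff]; omega
    have hb : (knightGraph a 1).Adj (s*n+a, n-2) (s*n+a+1, n+a-2) := by
      rw [knight_adj_iff]; omega
    have he1 : s(((s*n : ℕ), n-1), (s*n+a, n-2)) ∈ p.edges :=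
      htl s (le_refl s) (by omega)
    have hdisj : ∀ z, z ∈ p.support → z ∈ p2.support → False := by
      intro z h1 h2; rw [hsupp] at h1; rw [hsupp2] at h2; omega
    obtain ⟨c, hccyc, hcsupp, hsub1, hsub2⟩ := cycle_merge hc hc2 he1 hlk2 hdisj ha hb
    refine ⟨_, c, hccyc, ?_, ?_, ?_⟩
    · intro x; rw [hcsupp, hsupp, hsupp2]; omega
    · refine structured_preserve hstr hsub1 ?_
      intro i j j' hi hj hj' hcE
      rw [sym2_eq_iff] at hcE; simp only at hcE; omega
    · intro s' hs1 hs2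
      have hmul : (s+1)*n ≤ s'*n := Nat.mul_le_mul_right n hs1
      refine hsub1 _ (htl s' (by omega) hs2) ?_
      intro hcE; rw [sym2_eq_iff] at hcE; simp only at hcE; omega

/-- Sequential concatenation: if `[n]^2` admits a structured (a,1) knight's tour and an
A-linked (a,1) knight's tour, then `[kn]^2` admits a structured (a,1) knight's tour for
every `k ≥ 1`. -/
theorem structured_tour_scale (a n : ℕ) (ha : Even a) (hn : Even n)
    (h1 : ∃ (v : ℕ × ℕ) (p : (knightGraph a 1).Walk v v),
      IsBoardTour a 1 n p ∧ IsStructured a p)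
    (h2 : ∃ (v : ℕ × ℕ) (p : (knightGraph a 1).Walk v v),
      IsBoardTour a 1 n p ∧ IsALinked a p)
    (k : ℕ) (hk : 1 ≤ k) :
    ∃ (v : ℕ × ℕ) (p : (knightGraph a 1).Walk v v),
      IsBoardTour a 1 (k * n) p ∧ IsStructured a p := by

  have h2a : 2 ≤ a := by
    by_contra hlt
    have ha0 : a = 0 := by
      rcases ha with ⟨r, hr⟩; omega
    subst ha0
    obtain ⟨v, p, _, hlk⟩ := h2
    exact (p.adj_of_mem_edges hlk).ne rfl
  have hn2a : 2*a ≤ n := by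
    obtain ⟨v, p, ⟨hc, hsupp⟩, hstr⟩ := h1
    have hedge := (hstr (a-1) 0 (by omega) (by omega)).1 Even.zero
    have hmem := p.snd_mem_support_of_mem_edges hedge
    rw [hsupp] at hmem
    simp only at hmem
    omega
  rcases Nat.lt_or_ge k 2 with hk2 | hk2
  · have hk1 : k = 1 := by omega
    subst hk1
    obtain ⟨v, p, ⟨hc, hsupp⟩, hstr⟩ := h1
    exact ⟨v, p, ⟨hc, by intro x; rw [hsupp]; omega⟩, hstr⟩
  · obtain ⟨v, p, hc, hsupp, hstr, _⟩ := phase2 h2a hn2a hk2 h1 h2 k (le_refl k)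
    have hkn : 1*n ≤ k*n := Nat.mul_le_mul_right n hk
    exact ⟨v, p, ⟨hc, by intro x; rw [hsupp]; omega⟩, hstr⟩
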